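/- Let t > 1. There exists a point (w₁,w₂,w₃,w₄) ∈ ℂ⁴ satisfying w₁w₂ + w₃w₄ = 1, |w₁|² + |w₂|² + |w₃|² + |w₄|² = 2t, and (3i−3)·w₃²w₄² + (2−4i)·w₃w₄ + i = 0, if and only if t ≥ √((2+√2)/3). (Equivalently: the restriction of F to the quadric degenerates at some point of M_t³ if and only if t ≥ √((2+√2)/3).) -/

import Mathlib

open Complex

private lemma rlt2' : Real.sqrt 2 < 2 := by
  nlinarith [Real.sq_sqrt (by norm_num : (0:ℝ) ≤ 2), Real.sqrt_nonneg 2]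

private lemma key_sum' :
    Real.sqrt ((2 - Real.sqrt 2)/6) + Real.sqrt ((2 + Real.sqrt 2)/6)
      = Real.sqrt ((2 + Real.sqrt 2)/3) := by
  have hr0 := Real.sqrt_nonneg 2
  have hr2 : Real.sqrt 2 ^ 2 = 2 := Real.sq_sqrt (by norm_num)
  have h2 : Real.sqrt 2 < 2 := rlt2'
  have hA : Real.sqrt ((2 - Real.sqrt 2)/6) ^ 2 = (2 - Real.sqrt 2)/6 :=
    Real.sq_sqrt (by nlinarith)
  have hB : Real.sqrt ((2 + Real.sqrt 2)/6) ^ 2 = (2 + Real.sqrt 2)/6 :=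
    Real.sq_sqrt (by nlinarith)
  have hAB : Real.sqrt ((2 - Real.sqrt 2)/6) * Real.sqrt ((2 + Real.sqrt 2)/6)
      = Real.sqrt 2 / 6 := by
    rw [← Real.sqrt_mul (by nlinarith)]
    rw [show ((2 - Real.sqrt 2)/6 * ((2 + Real.sqrt 2)/6)) = (Real.sqrt 2/6)^2 by nlinarith]
    exact Real.sqrt_sq (by positivity)
  rw [show (2 + Real.sqrt 2)/3
      = (Real.sqrt ((2 - Real.sqrt 2)/6) + Real.sqrt ((2 + Real.sqrt 2)/6))^2 by nlinarith,
    Real.sqrt_sq (by positivity)]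

set_option maxHeartbeats 1000000 in
/-- For `t > 1`, there is a point of `M_t³` (in the `w`-coordinates) where the
Jacobian polynomial `(3i−3)w₃²w₄² + (2−4i)w₃w₄ + i` vanishes iff `t ≥ √((2+√2)/3)`. -/
theorem stmt_8 (t : ℝ) (ht : 1 < t) :
    (∃ w₁ w₂ w₃ w₄ : ℂ,
        w₁ * w₂ + w₃ * w₄ = 1 ∧
        ‖w₁‖ ^ 2 + ‖w₂‖ ^ 2 + ‖w₃‖ ^ 2 + ‖w₄‖ ^ 2 =
          2 * t ∧
        (3 * Complex.I - 3) * w₃ ^ 2 * w₄ ^ 2 + (2 - 4 * Complex.I) * (w₃ * w₄) + Complex.I = 0) ↔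
      Real.sqrt ((2 + Real.sqrt 2) / 3) ≤ t := by
  set r := Real.sqrt 2 with hrdef
  have hr0 : (0:ℝ) ≤ r := Real.sqrt_nonneg 2
  have hr2 : r ^ 2 = 2 := Real.sq_sqrt (by norm_num)
  have hrlt : r < 2 := rlt2'
  have hrc : ((r:ℂ)) ^ 2 = 2 := by
    have := congrArg (Complex.ofReal) hr2
    push_cast at this
    exact this
  set α := Real.sqrt ((2 - r)/6) with hαdef
  set β := Real.sqrt ((2 + r)/6) with hβdef
  have hα0 : 0 < α := Real.sqrt_pos.mpr (by nlinarith)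
  have hβ0 : 0 < β := Real.sqrt_pos.mpr (by nlinarith)
  have hα2 : α ^ 2 = (2 - r)/6 := Real.sq_sqrt (by nlinarith)
  have hβ2 : β ^ 2 = (2 + r)/6 := Real.sq_sqrt (by nlinarith)
  have hsum : α + β = Real.sqrt ((2 + Real.sqrt 2) / 3) := key_sum'
  rw [← hsum]
  constructor
  · rintro ⟨w₁, w₂, w₃, w₄, h1, h2, h3⟩
    set u := w₃ * w₄ with hu
    have h3' : (3*I - 3)*u^2 + (2 - 4*I)*u + I = 0 := by
      rw [hu]; linear_combination h3
    have hI : I^2 = -1 := Complex.I_sq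
    have hne : (3*I - 3 : ℂ) ≠ 0 := by
      simp [Complex.ext_iff]
    have hfac0 : (3*I - 3) * ((u - ((((3-r)/6 : ℝ):ℂ) + ((-1/6 : ℝ):ℂ)*I)) *
        (u - ((((3+r)/6 : ℝ):ℂ) + ((-1/6 : ℝ):ℂ)*I))) = 0 := by
      push_cast
      linear_combination h3' + ((3-3*I)/36 : ℂ) * hrc + (u + (I-7)/12) * hI
    have hfac : (u - ((((3-r)/6 : ℝ):ℂ) + ((-1/6 : ℝ):ℂ)*I)) *
        (u - ((((3+r)/6 : ℝ):ℂ) + ((-1/6 : ℝ):ℂ)*I)) = 0 :=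
      (mul_eq_zero.mp hfac0).resolve_left hne
    have g1 : 2 * ‖w₁ * w₂‖ ≤ ‖w₁‖ ^ 2 + ‖w₂‖ ^ 2 := by
      rw [norm_mul]
      nlinarith [sq_nonneg (‖w₁‖ - ‖w₂‖)]
    have g2 : 2 * ‖u‖ ≤ ‖w₃‖ ^ 2 + ‖w₄‖ ^ 2 := by
      rw [hu, norm_mul]
      nlinarith [sq_nonneg (‖w₃‖ - ‖w₄‖)]
    have hw12 : w₁ * w₂ = 1 - u := by rw [hu]; linear_combination h1
    rcases mul_eq_zero.mp hfac with hc | hc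
    · have hu' : u = (((3-r)/6 : ℝ):ℂ) + ((-1/6 : ℝ):ℂ)*I := sub_eq_zero.mp hc
      have habsu : ‖u‖ = α := by
        rw [hu', Complex.norm_def, Complex.normSq_add_mul_I,
          show ((3-r)/6)^2 + (-1/6 : ℝ)^2 = (2-r)/6 by nlinarith]
      have h1u : (1:ℂ) - u = (((3+r)/6 : ℝ):ℂ) + ((1/6 : ℝ):ℂ)*I := by
        rw [hu']; push_cast; ring
      have habs1u : ‖1 - u‖ = β := by
        rw [h1u, Complex.norm_def, Complex.normSq_add_mul_I,
          show ((3+r)/6)^2 + (1/6 : ℝ)^2 = (2+r)/6 by nlinarith]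
      rw [hw12, habs1u] at g1
      rw [habsu] at g2
      linarith
    · have hu' : u = (((3+r)/6 : ℝ):ℂ) + ((-1/6 : ℝ):ℂ)*I := sub_eq_zero.mp hc
      have habsu : ‖u‖ = β := by
        rw [hu', Complex.norm_def, Complex.normSq_add_mul_I,
          show ((3+r)/6)^2 + (-1/6 : ℝ)^2 = (2+r)/6 by nlinarith]
      have h1u : (1:ℂ) - u = (((3-r)/6 : ℝ):ℂ) + ((1/6 : ℝ):ℂ)*I := by
        rw [hu']; push_cast; ring
      have habs1u : ‖1 - u‖ = α := by
        rw [h1u, Complex.norm_def, Complex.normSq_add_mul_I,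
          show ((3-r)/6)^2 + (1/6 : ℝ)^2 = (2-r)/6 by nlinarith]
      rw [hw12, habs1u] at g1
      rw [habsu] at g2
      linarith
  · intro hts
    set b : ℂ := (((3+r)/6 : ℝ):ℂ) + ((-1/6 : ℝ):ℂ)*I with hbdef
    have habsb : ‖b‖ = β := by
      rw [hbdef, Complex.norm_def, Complex.normSq_add_mul_I,
        show ((3+r)/6)^2 + (-1/6 : ℝ)^2 = (2+r)/6 by nlinarith]
    set a : ℂ := 1 - b with hadef
    have ha' : a = (((3-r)/6 : ℝ):ℂ) + ((1/6 : ℝ):ℂ)*I := by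
      rw [hadef, hbdef]; push_cast; ring
    have habsa : ‖a‖ = α := by
      rw [ha', Complex.norm_def, Complex.normSq_add_mul_I,
        show ((3-r)/6)^2 + (1/6 : ℝ)^2 = (2-r)/6 by nlinarith]
    set S := 2*t - 2*β with hSdef
    have hS : 2*α ≤ S := by linarith
    have hSpos : 0 < S := by linarith
    set D := Real.sqrt (S^2 - 4*α^2) with hDdef
    have hD0 : 0 ≤ D := Real.sqrt_nonneg _
    have hD2 : D^2 = S^2 - 4*α^2 := Real.sq_sqrt (by nlinarith)
    set x := (S + D)/(2*α^2) with hxdef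
    have hx : 0 < x := by positivity
    have hxne : x ≠ 0 := ne_of_gt hx
    have hquad : α^2 * x + 1/x = S := by
      have hq2 : α^2 * x^2 - S*x + 1 = 0 := by
        rw [hxdef]
        field_simp
        nlinarith [hD2]
      field_simp
      linear_combination hq2
    set sβ := Real.sqrt β with hsβdef
    have hsβ0 : 0 < sβ := Real.sqrt_pos.mpr hβ0
    have hsβ2 : sβ^2 = β := Real.sq_sqrt hβ0.le
    set sx := Real.sqrt x with hsxdef
    have hsx0 : 0 < sx := Real.sqrt_pos.mpr hx
    have hsx2 : sx^2 = x := Real.sq_sqrt hx.le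
    refine ⟨a * (sx:ℂ), 1/(sx:ℂ), b/(sβ:ℂ), (sβ:ℂ), ?_, ?_, ?_⟩
    · have hsxne : (sx:ℂ) ≠ 0 := by exact_mod_cast ne_of_gt hsx0
      have hsβne : (sβ:ℂ) ≠ 0 := by exact_mod_cast ne_of_gt hsβ0
      have e1 : a * (sx:ℂ) * (1/(sx:ℂ)) = a := by field_simp
      have e2 : b/(sβ:ℂ) * (sβ:ℂ) = b := by field_simp
      rw [e1, e2, hadef]; ring
    · have hsβne : (sβ:ℂ) ≠ 0 := by exact_mod_cast ne_of_gt hsβ0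
      rw [norm_mul, norm_div, norm_one, norm_div, Complex.norm_real, Complex.norm_real, Real.norm_eq_abs, Real.norm_eq_abs,
        abs_of_pos hsx0, abs_of_pos hsβ0, habsa, habsb]
      rw [div_pow, div_pow, mul_pow, hsx2, hsβ2, one_pow]
      rw [show β^2/β = β by field_simp]
      rw [hSdef] at hquad
      linarith
    · have hsβne : (sβ:ℂ) ≠ 0 := by exact_mod_cast ne_of_gt hsβ0
      have hprod : (b/(sβ:ℂ))^2 * ((sβ:ℂ))^2 = b^2 := by field_simp
      rw [show (3*I - 3) * (b/(sβ:ℂ))^2 * ((sβ:ℂ))^2 = (3*I-3) * ((b/(sβ:ℂ))^2 * ((sβ:ℂ))^2) by ring,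
        hprod, show b/(sβ:ℂ) * (sβ:ℂ) = b by field_simp]
      have hI : I^2 = -1 := Complex.I_sq
      rw [hbdef]
      push_cast
      linear_combination (-(3-3*I)/36 : ℂ) * hrc
        + (-((3+(r:ℂ))/6 + (-1/6)*I + (I-7)/12)) * hI
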